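/- For any fixed θ₀ ∈ ℝ and every ε ∈ (0,1), with probability at least 1 − ε: n α M_α(θ₀) ≤ −n α (θ₀ − m) + (n α²/2)[(θ₀ − m)² + v] + 1/(2β) + log(ε⁻¹). -/

import Mathlib

open MeasureTheory ProbabilityTheory

/-- The PAC-Bayesian truncated mean statistic
`M_α(θ₀) = (1/(n α)) ∑ᵢ log (1 + α (Yᵢ - θ₀) + (α²/2) (Yᵢ - θ₀)² + 1/(2 β n))`. -/
noncomputable def Mstat (n : ℕ) (α β θ₀ : ℝ) (Y : Fin n → ℝ) : ℝ :=
  (1 / (n * α)) * ∑ i,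
    Real.log (1 + α * (Y i - θ₀) + α ^ 2 / 2 * (Y i - θ₀) ^ 2 + 1 / (2 * β * n))

set_option maxHeartbeats 1000000 in
/-- Proposition (upper deviation of the statistic at a fixed point): for any fixed `θ₀ ∈ ℝ`,
with probability at least `1 - ε`,
`n α M_α(θ₀) ≤ -n α (θ₀ - m) + (n α²/2)[(θ₀ - m)² + v] + 1/(2β) + log (ε⁻¹)`. -/
theorem Mstat_pointwise_upper_deviation
    {Ω : Type*} [MeasurableSpace Ω] (P : Measure Ω) [IsProbabilityMeasure P]
    (n : ℕ) (hn : 0 < n) (Y : Fin n → Ω → ℝ) (hYmeas : ∀ i, Measurable (Y i))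
    (μ : Measure ℝ) [IsProbabilityMeasure μ]
    (hindep : iIndepFun Y P)
    (hid : ∀ i, Measure.map (Y i) P = μ)
    (hL2 : Integrable (fun y => y ^ 2) μ)
    (m v : ℝ) (hm : m = ∫ y, y ∂μ) (hv : v = ∫ y, (y - m) ^ 2 ∂μ)
    (α β : ℝ) (hα : 0 < α) (hβ : 0 < β)
    (θ₀ : ℝ) (ε : ℝ) (hε : ε ∈ Set.Ioo (0 : ℝ) 1) :
    ENNReal.ofReal (1 - ε) ≤
      P {ω | n * α * Mstat n α β θ₀ (fun i => Y i ω) ≤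
        -(n * α * (θ₀ - m)) + n * α ^ 2 / 2 * ((θ₀ - m) ^ 2 + v) + 1 / (2 * β) +
          Real.log ε⁻¹} := by
  obtain ⟨hε0, hε1⟩ := hε
  have hn' : (0:ℝ) < n := by exact_mod_cast hn
  set c : ℝ := 1 / (2 * β * n) with hc
  have hcpos : 0 < c := by positivity
  set f : ℝ → ℝ := fun y => 1 + α * (y - θ₀) + α ^ 2 / 2 * (y - θ₀) ^ 2 + c with hf
  have hfpos : ∀ y, 0 < f y := by
    intro y
    have h1 := sq_nonneg (1 + α * (y - θ₀))
    simp only [hf]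
    nlinarith [hcpos]
  have hfmeas : Measurable f := by fun_prop
  -- integrability on μ
  have hI1 : Integrable (fun y => y) μ := by
    refine ((integrable_const (1:ℝ)).add hL2).mono
      measurable_id.aestronglyMeasurable (ae_of_all _ fun y => ?_)
    simp only [Real.norm_eq_abs, Pi.add_apply]
    have h1 : |y| ≤ 1 + y ^ 2 := by nlinarith [sq_abs y, abs_nonneg y, sq_nonneg (|y| - 1)]
    have h2 : (0:ℝ) ≤ 1 + y ^ 2 := by positivity
    rwa [abs_of_nonneg h2]
  have hIsq : Integrable (fun y => (y - θ₀) ^ 2) μ := by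
    refine ((hL2.sub (hI1.const_mul (2 * θ₀))).add (integrable_const (θ₀ ^ 2))).congr
      (ae_of_all _ fun y => ?_)
    simp only [Pi.add_apply, Pi.sub_apply]
    ring
  have hIa : Integrable (fun y => α * (y - θ₀)) μ := by
    refine ((hI1.const_mul α).sub (integrable_const (α * θ₀))).congr (ae_of_all _ fun y => ?_)
    simp only [Pi.sub_apply]
    ring
  have hIb : Integrable (fun y => α ^ 2 / 2 * (y - θ₀) ^ 2) μ := hIsq.const_mul _
  have hIab : Integrable (fun y => α * (y - θ₀) + α ^ 2 / 2 * (y - θ₀) ^ 2) μ := by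
    refine (hIa.add hIb).congr (ae_of_all _ fun y => ?_)
    simp only [Pi.add_apply]
  have hIf : Integrable f μ := by
    refine ((integrable_const ((1:ℝ) + c)).add hIab).congr (ae_of_all _ fun y => ?_)
    simp only [Pi.add_apply, hf]
    ring
  -- the integral values
  have hIm : ∫ y, (y - θ₀) ∂μ = m - θ₀ := by
    rw [integral_sub hI1 (integrable_const θ₀), integral_const, probReal_univ, hm]
    simp
  have hIym : Integrable (fun y => y - m) μ := hI1.sub (integrable_const m)
  have hIvm : Integrable (fun y => (y - m) ^ 2) μ := by
    refine ((hL2.sub (hI1.const_mul (2 * m))).add (integrable_const (m ^ 2))).congr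
      (ae_of_all _ fun y => ?_)
    simp only [Pi.add_apply, Pi.sub_apply]
    ring
  have h0 : ∫ y, (y - m) ∂μ = 0 := by
    rw [integral_sub hI1 (integrable_const m), integral_const, probReal_univ, hm]
    simp
  have hIsq' : ∫ y, (y - θ₀) ^ 2 ∂μ = v + (θ₀ - m) ^ 2 := by
    have hIcm : Integrable (fun y => (2 * (m - θ₀)) * (y - m)) μ := hIym.const_mul _
    have hIsum : Integrable (fun y => (y - m) ^ 2 + (2 * (m - θ₀)) * (y - m)) μ := by
      refine (hIvm.add hIcm).congr (ae_of_all _ fun y => ?_)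
      simp only [Pi.add_apply]
    calc ∫ y, (y - θ₀) ^ 2 ∂μ
        = ∫ y, ((y - m) ^ 2 + (2 * (m - θ₀)) * (y - m) + (m - θ₀) ^ 2) ∂μ := by
          refine integral_congr_ae (ae_of_all _ fun y => ?_); ring
      _ = (∫ y, ((y - m) ^ 2 + (2 * (m - θ₀)) * (y - m)) ∂μ) + ∫ _y, (m - θ₀) ^ 2 ∂μ :=
          integral_add hIsum (integrable_const _)
      _ = v + (θ₀ - m) ^ 2 := by
          rw [integral_add hIvm hIcm, integral_const_mul, h0, integral_const, probReal_univ, hv]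
          simp
          ring
  set a : ℝ := α * (m - θ₀) + α ^ 2 / 2 * (v + (θ₀ - m) ^ 2) + c with ha
  have hμf : ∫ y, f y ∂μ = 1 + a := by
    calc ∫ y, f y ∂μ
        = ∫ y, ((1 + c) + (α * (y - θ₀) + α ^ 2 / 2 * (y - θ₀) ^ 2)) ∂μ := by
          refine integral_congr_ae (ae_of_all _ fun y => ?_)
          simp only [hf]; ring
      _ = (∫ _y, ((1:ℝ) + c) ∂μ) + ∫ y, (α * (y - θ₀) + α ^ 2 / 2 * (y - θ₀) ^ 2) ∂μ :=
          integral_add (integrable_const _) hIab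
      _ = (1 + c) + (α * (m - θ₀) + α ^ 2 / 2 * (v + (θ₀ - m) ^ 2)) := by
          rw [integral_add hIa hIb, integral_const_mul, integral_const_mul, hIm, hIsq',
            integral_const, probReal_univ]
          simp
      _ = 1 + a := by rw [ha]; ring
  -- the log random variables
  set X : Fin n → Ω → ℝ := fun i ω => Real.log (f (Y i ω)) with hX
  have hXmeas : ∀ i, Measurable (X i) := fun i => (hfmeas.comp (hYmeas i)).log
  have hindepX : iIndepFun X P :=
    hindep.comp (fun _ y => Real.log (f y)) (fun _ => hfmeas.log)
  have hexpX : ∀ i ω, Real.exp (1 * X i ω) = f (Y i ω) := by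
    intro i ω; rw [one_mul, Real.exp_log (hfpos _)]
  have hIfY : ∀ i, Integrable (fun ω => f (Y i ω)) P := by
    intro i
    have : Integrable f (Measure.map (Y i) P) := by rw [hid i]; exact hIf
    exact (integrable_map_measure hfmeas.aestronglyMeasurable (hYmeas i).aemeasurable).mp this
  have hintexp : ∀ i, Integrable (fun ω => Real.exp (1 * X i ω)) P := by
    intro i
    exact (hIfY i).congr (ae_of_all _ fun ω => (hexpX i ω).symm)
  have hmgf_i : ∀ i, mgf (X i) P 1 = 1 + a := by
    intro i
    unfold mgf
    calc ∫ ω, Real.exp (1 * X i ω) ∂P = ∫ ω, f (Y i ω) ∂P :=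
          integral_congr_ae (ae_of_all _ fun ω => hexpX i ω)
      _ = ∫ y, f y ∂μ := by
          rw [← hid i, integral_map (hYmeas i).aemeasurable hfmeas.aestronglyMeasurable]
      _ = 1 + a := hμf
  have hmgfS : mgf (∑ i, X i) P 1 = (1 + a) ^ n := by
    rw [hindepX.mgf_sum hXmeas Finset.univ]
    simp [hmgf_i]
  have hintS : Integrable (fun ω => Real.exp (1 * (∑ i, X i) ω)) P :=
    hindepX.integrable_exp_mul_sum hXmeas (fun i _ => hintexp i)
  set C : ℝ := -(n * α * (θ₀ - m)) + n * α ^ 2 / 2 * ((θ₀ - m) ^ 2 + v) + 1 / (2 * β) +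
      Real.log ε⁻¹ with hC
  have hCa : C = n * a + Real.log ε⁻¹ := by
    simp only [hC, ha, hc]
    field_simp
    ring
  have hcher := measure_ge_le_exp_mul_mgf (μ := P) (X := ∑ i, X i) C zero_le_one hintS
  have hbound : Real.exp (-1 * C) * mgf (∑ i, X i) P 1 ≤ ε := by
    rw [hmgfS]
    have h1a : (0:ℝ) ≤ 1 + a := by
      have h := integral_nonneg (f := f) (fun y => (hfpos y).le) (μ := μ)
      linarith [hμf ▸ h]
    have hpow : (1 + a) ^ n ≤ Real.exp (n * a) := by
      calc (1 + a) ^ n ≤ (Real.exp a) ^ n :=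
            pow_le_pow_left₀ h1a (by linarith [Real.add_one_le_exp a]) n
        _ = Real.exp (n * a) := by rw [← Real.exp_nat_mul]
    calc Real.exp (-1 * C) * (1 + a) ^ n ≤ Real.exp (-1 * C) * Real.exp (n * a) :=
          mul_le_mul_of_nonneg_left hpow (Real.exp_pos _).le
      _ = Real.exp (n * a - C) := by rw [← Real.exp_add]; ring_nf
      _ = ε := by
          rw [hCa, Real.log_inv]
          have : (n:ℝ) * a - (n * a + -Real.log ε) = Real.log ε := by ring
          rw [this, Real.exp_log hε0]
  have htail : (P {ω | C ≤ (∑ i, X i) ω}).toReal ≤ ε := le_trans hcher hbound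
  -- the event
  have hSmeas : Measurable (∑ i, X i) := by
    have h := Finset.measurable_sum Finset.univ (fun i (_ : i ∈ Finset.univ) => hXmeas i)
    convert h using 1
    ext ω
    simp [Finset.sum_apply]
  have hEset : {ω | (n:ℝ) * α * Mstat n α β θ₀ (fun i => Y i ω) ≤ C} =
      {ω | (∑ i, X i) ω ≤ C} := by
    ext ω
    have hMeq : (n:ℝ) * α * Mstat n α β θ₀ (fun i => Y i ω) = (∑ i, X i) ω := by
      simp only [Mstat, hX, hf, hc, Finset.sum_apply]
      rw [← mul_assoc]
      have h1 : (n:ℝ) * α * (1 / (n * α)) = 1 := by field_simp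
      rw [h1, one_mul]
    simp only [Set.mem_setOf_eq, hMeq]
  have hEmeas : MeasurableSet {ω | (∑ i, X i) ω ≤ C} :=
    measurableSet_le hSmeas measurable_const
  have hcompl : P ({ω | (∑ i, X i) ω ≤ C}ᶜ) ≤ ENNReal.ofReal ε := by
    have hsub : ({ω | (∑ i, X i) ω ≤ C}ᶜ : Set Ω) ⊆ {ω | C ≤ (∑ i, X i) ω} := by
      intro ω hω
      simp only [Set.mem_compl_iff, Set.mem_setOf_eq, not_le] at hω ⊢
      exact hω.le
    refine le_trans (measure_mono hsub) ?_
    rw [ENNReal.le_ofReal_iff_toReal_le (measure_ne_top _ _) hε0.le]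
    exact htail
  calc ENNReal.ofReal (1 - ε) = 1 - ENNReal.ofReal ε := by
        rw [ENNReal.ofReal_sub _ hε0.le, ENNReal.ofReal_one]
    _ ≤ 1 - P ({ω | (∑ i, X i) ω ≤ C}ᶜ) := tsub_le_tsub_left hcompl 1
    _ = P {ω | (∑ i, X i) ω ≤ C} := by
        rw [← prob_compl_eq_one_sub hEmeas.compl, compl_compl]
    _ = P {ω | (n:ℝ) * α * Mstat n α β θ₀ (fun i => Y i ω) ≤ C} := by rw [hEset]
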